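/- In a directed n-cycle with nonzero edge weights and 1-P ≠ 0, suppose the EMP has B ∩ C ≠ ∅, say node 1 is both excited and measured, and B ∪ C = {1,…,n}. Then the observed entries {T_{i1} : i ∈ C} and {T_{1j} : j ∈ B} of T = (I-G)^{-1} uniquely determine all edge weights g_1,…,g_n. In particular T_{11} = 1/(1-P) determines P, and each g_i is then recovered recursively as a ratio of observed T entries and previously recovered weights. -/

import Mathlib

/-- The `n × n` network matrix of a directed `n`-cycle: entry `(i+1 mod n, i)` is `g i`. -/
def cycleMatrix {K : Type*} [Field K] {n : ℕ} [NeZero n] (g : Fin n → K) :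
    Matrix (Fin n) (Fin n) K :=
  Matrix.of fun i j => if i = j + 1 then g j else 0

namespace CycleAux

variable {K : Type*} [Field K] {n : ℕ} [NeZero n]
open Fin.CommRing

def pathProd (g : Fin n → K) (i j : Fin n) : K :=
  ∏ k ∈ Finset.range ((i - j).val), g (j + (k : Fin n))

lemma pathProd_self (g : Fin n → K) (j : Fin n) : pathProd g j j = 1 := by
  simp [pathProd]

lemma pathProd_ne_zero (g : Fin n → K) (hg : ∀ i, g i ≠ 0) (i j : Fin n) :
    pathProd g i j ≠ 0 :=
  Finset.prod_ne_zero_iff.mpr fun k _ => hg _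

lemma prod_shift (g : Fin n → K) (l : Fin n) :
    ∏ k ∈ Finset.range n, g (l + (k : Fin n)) = ∏ t, g t := by
  rw [← Fin.prod_univ_eq_prod_range (fun k => g (l + (k : Fin n))) n]
  simp only [Fin.cast_val_eq_self]
  exact Fintype.prod_equiv (Equiv.addLeft l) _ _ (fun x => rfl)

lemma val_one' (hn : 2 ≤ n) : ((1 : Fin n) : ℕ) = 1 := by
  rw [Fin.val_one']; exact Nat.mod_eq_of_lt hn

lemma sub_one_val (hn : 2 ≤ n) {x : Fin n} (hx : x ≠ 0) : (x - 1).val = x.val - 1 := by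
  have hv : x.val ≠ 0 := fun h0 => hx (Fin.ext (by simp [h0]))
  rw [Fin.sub_def, val_one' hn]
  have hlt : x.val < n := x.isLt
  show ((n - 1) + x.val) % n = x.val - 1
  have e : (n - 1) + x.val = (x.val - 1) + n := by omega
  rw [e, Nat.add_mod_right, Nat.mod_eq_of_lt (by omega)]

lemma pathProd_step (hn : 2 ≤ n) (g : Fin n → K) {i l : Fin n} (h : i ≠ l) :
    pathProd g i l = g (i - 1) * pathProd g (i - 1) l := by
  have hm : (i - l).val ≠ 0 := by
    intro h0
    exact h (sub_eq_zero.mp (Fin.ext (by simp [h0])))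
  have h1 : (i - 1 - l).val = (i - l).val - 1 := by
    have e1 : i - 1 - l = (i - l) - 1 := by ring
    rw [e1, sub_one_val hn (fun h0 => hm (by simp [h0]))]
  have h2 : l + (((i - l).val - 1 : ℕ) : Fin n) = i - 1 := by
    have e2 : (((i - l).val - 1 : ℕ) : Fin n) = (i - l) - 1 := by
      apply Fin.ext
      rw [Fin.val_cast_of_lt (by omega)]
      rw [sub_one_val hn (fun h0 => hm (by simp [h0]))]
    rw [e2]; ring
  rw [pathProd, pathProd, h1]
  rw [show (Finset.range (i-l).val) = Finset.range (((i - l).val - 1) + 1) by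
    congr 1; omega]
  rw [Finset.prod_range_succ, h2, mul_comm]

lemma neg_one_val (hn : 2 ≤ n) : ((-1 : Fin n) : ℕ) = n - 1 := by
  obtain ⟨m, rfl⟩ := Nat.exists_eq_succ_of_ne_zero (NeZero.ne n)
  simp [Fin.coe_neg_one]

lemma prod_g_neg_one (hn : 2 ≤ n) (g : Fin n → K) (l : Fin n) :
    g (l - 1) * pathProd g (l - 1) l = ∏ t, g t := by
  have hneg : ((l - 1) - l).val = n - 1 := by
    rw [show (l - 1) - l = -1 by ring, neg_one_val hn]
  rw [pathProd, hneg, ← prod_shift g l]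
  obtain ⟨m, rfl⟩ : ∃ m, n = m + 1 := ⟨n - 1, by omega⟩
  simp only [Nat.add_sub_cancel, Finset.prod_range_succ]
  have e : l + (((m : ℕ)) : Fin (m+1)) = l - 1 := by
    have e2 : (((m : ℕ)) : Fin (m+1)) = -1 := by
      apply Fin.ext; rw [Fin.val_cast_of_lt (by omega), neg_one_val hn]; omega
    rw [e2]; ring
  rw [e, mul_comm]

end CycleAux

namespace CycleAux
variable {K : Type*} [Field K] {n : ℕ} [NeZero n]
open Fin.CommRing

lemma cycInv_eq (hn : 2 ≤ n) (g : Fin n → K) (hP : 1 - ∏ t, g t ≠ 0) :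
    (1 - cycleMatrix g)⁻¹ =
      Matrix.of (fun i j => pathProd g i j / (1 - ∏ t, g t)) := by
  apply Matrix.inv_eq_right_inv
  ext i l
  rw [Matrix.mul_apply]
  have hrw : ∀ j : Fin n, (i = j + 1) ↔ (i - 1 = j) := by
    intro j
    constructor
    · rintro rfl; ring
    · rintro rfl; ring
  simp only [Matrix.sub_apply, Matrix.one_apply, cycleMatrix, Matrix.of_apply, sub_mul,
    ite_mul, one_mul, zero_mul, Finset.sum_sub_distrib]
  simp only [hrw]
  rw [Finset.sum_ite_eq, Finset.sum_ite_eq]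
  simp only [Finset.mem_univ, if_true]
  by_cases hil : i = l
  · subst hil
    rw [pathProd_self, if_pos rfl]
    have key : g (i - 1) * pathProd g (i - 1) i = ∏ t, g t := prod_g_neg_one hn g i
    field_simp
    rw [key]
  · rw [if_neg hil, pathProd_step hn g hil]
    field_simp
    simp

def partialProd (g : Fin n → K) (m : ℕ) : K :=
  ∏ k ∈ Finset.range m, g ((k : ℕ) : Fin n)

lemma partialProd_succ (g : Fin n → K) (m : ℕ) :
    partialProd g (m + 1) = partialProd g m * g ((m : ℕ) : Fin n) :=
  Finset.prod_range_succ _ _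

lemma partialProd_ne_zero (g : Fin n → K) (hg : ∀ i, g i ≠ 0) (m : ℕ) :
    partialProd g m ≠ 0 :=
  Finset.prod_ne_zero_iff.mpr fun k _ => hg _

lemma partialProd_n (g : Fin n → K) : partialProd g n = ∏ t, g t := by
  rw [partialProd, ← Fin.prod_univ_eq_prod_range (fun k => g ((k : ℕ) : Fin n)) n]
  simp [Fin.cast_val_eq_self]

lemma pathProd_zero_right (g : Fin n → K) (i : Fin n) :
    pathProd g i 0 = partialProd g i.val := by
  rw [pathProd, partialProd, sub_zero]
  exact Finset.prod_congr rfl fun k _ => by rw [zero_add]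

lemma partial_mul_pathProd (hn : 2 ≤ n) (g : Fin n → K) {j : Fin n} (hj : j ≠ 0) :
    partialProd g j.val * pathProd g 0 j = ∏ t, g t := by
  have hv : j.val ≠ 0 := fun h0 => hj (Fin.ext (by simp [h0]))
  have h1 : ((0 : Fin n) - j).val = n - j.val := by
    rw [Fin.sub_def]
    show (n - j.val + 0) % n = n - j.val
    rw [Nat.add_zero, Nat.mod_eq_of_lt (by omega)]
  have h2 : ∀ k, j + ((k : ℕ) : Fin n) = (((j.val + k : ℕ)) : Fin n) := by
    intro k
    apply Fin.ext
    simp [Fin.add_def, Nat.add_mod]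
  rw [pathProd, h1]
  rw [Finset.prod_congr rfl (fun k _ => by rw [h2 k])]
  rw [partialProd, ← Finset.prod_range_add (fun t => g ((t : ℕ) : Fin n)) j.val (n - j.val)]
  rw [show j.val + (n - j.val) = n by omega]
  exact partialProd_n g

end CycleAux

open CycleAux in
/-- If node `1` (index `0`) is both excited and measured and every node is excited or
measured, then the observed entries `T_{i1}` for measured `i` and `T_{1j}` for excited
`j` of `T = (I-G)⁻¹` uniquely determine all edge weights of the cycle. -/
theorem overlap_EMP_identifies_cycle {K : Type*} [Field K] {n : ℕ} [NeZero n]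
    (hn : 2 ≤ n) (B C : Finset (Fin n))
    (h1B : (0 : Fin n) ∈ B) (h1C : (0 : Fin n) ∈ C) (hcover : B ∪ C = Finset.univ)
    (g g' : Fin n → K) (hg : ∀ i, g i ≠ 0) (hg' : ∀ i, g' i ≠ 0)
    (hP : 1 - ∏ i, g i ≠ 0) (hP' : 1 - ∏ i, g' i ≠ 0)
    (hcol : ∀ i ∈ C, (1 - cycleMatrix g)⁻¹ i 0 = (1 - cycleMatrix g')⁻¹ i 0)
    (hrow : ∀ j ∈ B, (1 - cycleMatrix g)⁻¹ 0 j = (1 - cycleMatrix g')⁻¹ 0 j) :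
    g = g' := by
  simp only [cycInv_eq hn g hP, cycInv_eq hn g' hP', Matrix.of_apply] at hcol hrow
  -- equality of the products
  have h00 := hcol 0 h1C
  rw [pathProd_self, pathProd_self] at h00
  field_simp at h00
  have hPP : (∏ i, g i) = ∏ i, g' i := (sub_right_injective h00).symm
  have hden : (1 - ∏ i, g i) = (1 - ∏ i, g' i) := by rw [hPP]
  have hPne : (∏ i, g i) ≠ 0 := Finset.prod_ne_zero_iff.mpr fun i _ => hg i
  have key : ∀ m : ℕ, m ≤ n → partialProd g m = partialProd g' m := by
    intro m hm
    rcases eq_or_lt_of_le hm with rfl | hm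
    · rw [partialProd_n, partialProd_n, hPP]
    · set i : Fin n := ⟨m, hm⟩ with hi
      have hmem : i ∈ B ∪ C := by rw [hcover]; exact Finset.mem_univ i
      have hval : i.val = m := rfl
      rcases Finset.mem_union.mp hmem with hB | hC
      · by_cases hm0 : m = 0
        · simp [hm0, partialProd]
        · have hj : i ≠ 0 := by
            intro h0
            exact hm0 (by rw [← hval, h0, Fin.val_zero])
          have h := hrow i hB
          rw [hden] at h
          have heq : pathProd g 0 i = pathProd g' 0 i :=
            mul_right_cancel₀ (inv_ne_zero hP')
              (by rwa [div_eq_mul_inv, div_eq_mul_inv] at h)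
          have hp1 := partial_mul_pathProd hn g hj
          have hp2 := partial_mul_pathProd hn g' hj
          rw [hval] at hp1 hp2
          have hpne : pathProd g' 0 i ≠ 0 := pathProd_ne_zero g' hg' 0 i
          have : partialProd g m * pathProd g' 0 i =
              partialProd g' m * pathProd g' 0 i := by
            rw [hp2, ← hPP, ← hp1, heq]
          exact mul_right_cancel₀ hpne this
      · have h := hcol i hC
        rw [hden] at h
        have heq : pathProd g i 0 = pathProd g' i 0 :=
          mul_right_cancel₀ (inv_ne_zero hP')
            (by rwa [div_eq_mul_inv, div_eq_mul_inv] at h)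
        rw [pathProd_zero_right, pathProd_zero_right, hval] at heq
        exact heq
  funext i
  have h1 := key i.val (le_of_lt i.isLt)
  have h2 := key (i.val + 1) i.isLt
  rw [partialProd_succ, partialProd_succ, h1] at h2
  have := mul_left_cancel₀ (partialProd_ne_zero g' hg' i.val) h2
  rwa [Fin.cast_val_eq_self] at this
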